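/- Let Λ, ε, γ, K₀ > 0 and T > 0. Let u : [0, T] → ℝ be continuous with u(t) > 0 for all t ∈ [0, T], differentiable on (0, T), and suppose that for all t ∈ (0, T): u'(t) ≥ −(2Λε·e^{−γt} + 2ε²·e^{−2γt})·u(t) − 2(K₀ + Λ)ε·e^{−γt}·√(u(t)). Then for every t ∈ [0, T]: √(u(t)) ≥ √(u(0))·e^{−(2Λε + ε²)/(2γ)} − (K₀ + Λ)ε/γ. -/

import Mathlib

/-- Differential-inequality core of part (2) of Lemma 3.2:
from `u' ≥ -(2Λε e^{-γt} + 2ε² e^{-2γt}) u - 2(K₀+Λ)ε e^{-γt} √u` deduce the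
uniform-in-time lower bound
`√(u t) ≥ √(u 0) e^{-(2Λε+ε²)/(2γ)} - (K₀+Λ)ε/γ`. -/
theorem sqrt_lower_bound_of_deriv_ineq_exp
    (Λ ε γ K₀ T : ℝ) (hΛ : 0 < Λ) (hε : 0 < ε) (hγ : 0 < γ) (hK₀ : 0 < K₀) (hT : 0 < T)
    (u u' : ℝ → ℝ)
    (hu_cont : ContinuousOn u (Set.Icc 0 T))
    (hu_pos : ∀ t ∈ Set.Icc 0 T, 0 < u t)
    (hu_deriv : ∀ t ∈ Set.Ioo 0 T, HasDerivAt u (u' t) t)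
    (hu_ineq : ∀ t ∈ Set.Ioo 0 T,
      -(2 * Λ * ε * Real.exp (-γ * t) + 2 * ε ^ 2 * Real.exp (-2 * γ * t)) * u t
        - 2 * (K₀ + Λ) * ε * Real.exp (-γ * t) * Real.sqrt (u t) ≤ u' t) :
    ∀ t ∈ Set.Icc 0 T,
      Real.sqrt (u 0) * Real.exp (-(2 * Λ * ε + ε ^ 2) / (2 * γ)) - (K₀ + Λ) * ε / γ
        ≤ Real.sqrt (u t) := by
  -- auxiliary functions
  set a : ℝ → ℝ := fun s => Λ * ε * Real.exp (-γ * s) + ε ^ 2 * Real.exp (-2 * γ * s) with ha_def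
  set F : ℝ → ℝ := fun s => Λ * ε / γ * (1 - Real.exp (-γ * s))
      + ε ^ 2 / (2 * γ) * (1 - Real.exp (-2 * γ * s)) with hF_def
  set b : ℝ → ℝ := fun s => (K₀ + Λ) * ε * Real.exp (-γ * s) with hb_def
  set B : ℝ → ℝ := fun s => (K₀ + Λ) * ε / γ * (1 - Real.exp (-γ * s)) with hB_def
  have hexp : ∀ (c s : ℝ), HasDerivAt (fun x : ℝ => Real.exp (c * x)) (c * Real.exp (c * s)) s := by
    intro c s
    have h1 : HasDerivAt (fun x : ℝ => c * x) c s := by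
      simpa using (hasDerivAt_id s).const_mul c
    simpa [mul_comm] using h1.exp
  have hF : ∀ s : ℝ, HasDerivAt F (a s) s := by
    intro s
    have h1 := hexp (-γ) s
    have h2 := hexp (-2 * γ) s
    have h3 : HasDerivAt (fun x : ℝ => Λ * ε / γ * (1 - Real.exp (-γ * x)))
        (Λ * ε / γ * (0 - (-γ) * Real.exp (-γ * s))) s :=
      (((hasDerivAt_const s (1:ℝ)).sub h1).const_mul _)
    have h4 : HasDerivAt (fun x : ℝ => ε ^ 2 / (2 * γ) * (1 - Real.exp (-2 * γ * x)))
        (ε ^ 2 / (2 * γ) * (0 - (-2 * γ) * Real.exp (-2 * γ * s))) s :=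
      (((hasDerivAt_const s (1:ℝ)).sub h2).const_mul _)
    have := h3.add h4
    refine this.congr_deriv ?_
    simp only [ha_def]
    field_simp
    ring
  have hB : ∀ s : ℝ, HasDerivAt B (b s) s := by
    intro s
    have h1 := hexp (-γ) s
    have h3 : HasDerivAt (fun x : ℝ => (K₀ + Λ) * ε / γ * (1 - Real.exp (-γ * x)))
        ((K₀ + Λ) * ε / γ * (0 - (-γ) * Real.exp (-γ * s))) s :=
      (((hasDerivAt_const s (1:ℝ)).sub h1).const_mul _)
    convert h3 using 1
    simp only [hb_def]
    field_simp
    ring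
  have hFcont : Continuous F := by
    simp only [hF_def]; fun_prop
  have hBcont : Continuous B := by
    simp only [hB_def]; fun_prop
  have hFle : ∀ s : ℝ, F s ≤ (2 * Λ * ε + ε ^ 2) / (2 * γ) := by
    intro s
    have h1 : (2 * Λ * ε + ε ^ 2) / (2 * γ) - F s
        = Λ * ε / γ * Real.exp (-γ * s) + ε ^ 2 / (2 * γ) * Real.exp (-2 * γ * s) := by
      simp only [hF_def]; field_simp; ring
    have h2 : 0 ≤ Λ * ε / γ * Real.exp (-γ * s) := by positivity
    have h3 : 0 ≤ ε ^ 2 / (2 * γ) * Real.exp (-2 * γ * s) := by positivity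
    linarith
  have hFmono : ∀ s r : ℝ, s ≤ r → F s ≤ F r := by
    intro s r hsr
    have e1 : Real.exp (-γ * r) ≤ Real.exp (-γ * s) := by
      apply Real.exp_le_exp.2; nlinarith
    have e2 : Real.exp (-2 * γ * r) ≤ Real.exp (-2 * γ * s) := by
      apply Real.exp_le_exp.2; nlinarith
    have t1 : 0 ≤ Λ * ε / γ * (Real.exp (-γ * s) - Real.exp (-γ * r)) := by
      apply mul_nonneg (by positivity); linarith
    have t2 : 0 ≤ ε ^ 2 / (2 * γ) * (Real.exp (-2 * γ * s) - Real.exp (-2 * γ * r)) := by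
      apply mul_nonneg (by positivity); linarith
    simp only [hF_def]
    nlinarith [t1, t2]
  have hBle : ∀ s : ℝ, B s ≤ (K₀ + Λ) * ε / γ := by
    intro s
    have h2 : 0 ≤ (K₀ + Λ) * ε / γ * Real.exp (-γ * s) := by positivity
    have h1 : (K₀ + Λ) * ε / γ - B s = (K₀ + Λ) * ε / γ * Real.exp (-γ * s) := by
      simp only [hB_def]; ring
    linarith
  have hF0 : F 0 = 0 := by simp [hF_def]
  have hB0 : B 0 = 0 := by simp [hB_def]
  -- main argument
  intro t ht
  obtain ⟨ht0, htT⟩ := ht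
  set h : ℝ → ℝ := fun s => Real.sqrt (u s) * Real.exp (F s) + Real.exp (F t) * B s with hh_def
  have hsub : Set.Icc (0:ℝ) t ⊆ Set.Icc 0 T := Set.Icc_subset_Icc le_rfl htT
  have hmono : MonotoneOn h (Set.Icc 0 t) := by
    apply monotoneOn_of_deriv_nonneg (convex_Icc 0 t)
    · apply ContinuousOn.add
      · exact ((hu_cont.mono hsub).sqrt).mul (hFcont.rexp.continuousOn)
      · exact (continuous_const.mul hBcont).continuousOn
    · intro x hx
      rw [interior_Icc] at hx
      have hx' : x ∈ Set.Ioo 0 T := ⟨hx.1, lt_of_lt_of_le hx.2 htT⟩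
      have hux : 0 < u x := hu_pos x (Set.mem_Icc.2 ⟨hx'.1.le, hx'.2.le⟩)
      have hvd : HasDerivAt (fun y => Real.sqrt (u y)) (1 / (2 * Real.sqrt (u x)) * u' x) x :=
        (Real.hasDerivAt_sqrt (ne_of_gt hux)).comp x (hu_deriv x hx')
      exact (((hvd.mul (hF x).exp).add ((hB x).const_mul (Real.exp (F t)))).differentiableAt).differentiableWithinAt
    · intro x hx
      rw [interior_Icc] at hx
      have hx' : x ∈ Set.Ioo 0 T := ⟨hx.1, lt_of_lt_of_le hx.2 htT⟩
      have hux : 0 < u x := hu_pos x (Set.mem_Icc.2 ⟨hx'.1.le, hx'.2.le⟩)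
      have hS : 0 < Real.sqrt (u x) := Real.sqrt_pos.2 hux
      have hS2 : Real.sqrt (u x) ^ 2 = u x := Real.sq_sqrt hux.le
      have hvd : HasDerivAt (fun y => Real.sqrt (u y)) (1 / (2 * Real.sqrt (u x)) * u' x) x :=
        (Real.hasDerivAt_sqrt (ne_of_gt hux)).comp x (hu_deriv x hx')
      have hhd : HasDerivAt h
          (1 / (2 * Real.sqrt (u x)) * u' x * Real.exp (F x)
            + Real.sqrt (u x) * (Real.exp (F x) * a x) + Real.exp (F t) * b x) x := by
        have := (hvd.mul (hF x).exp).add ((hB x).const_mul (Real.exp (F t)))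
        refine this.congr_deriv ?_; ring
      rw [hhd.deriv]
      have hu := hu_ineq x hx'
      have key : -(a x * Real.sqrt (u x)) - b x ≤ 1 / (2 * Real.sqrt (u x)) * u' x := by
        rw [one_div, inv_mul_eq_div, le_div_iff₀ (by positivity : (0:ℝ) < 2 * Real.sqrt (u x))]
        simp only [ha_def, hb_def]
        have hS2' : (Λ * ε * Real.exp (-γ * x) + ε ^ 2 * Real.exp (-2 * γ * x)) * Real.sqrt (u x) ^ 2
            = (Λ * ε * Real.exp (-γ * x) + ε ^ 2 * Real.exp (-2 * γ * x)) * u x := by rw [hS2]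
        nlinarith [hu, hS2']
      have hex : (0:ℝ) < Real.exp (F x) := Real.exp_pos _
      have hkey2 := mul_le_mul_of_nonneg_right key hex.le
      have hee : Real.exp (F x) ≤ Real.exp (F t) := Real.exp_le_exp.2 (hFmono x t hx.2.le)
      have hb0 : 0 ≤ b x := by simp only [hb_def]; positivity
      have hprod : 0 ≤ b x * (Real.exp (F t) - Real.exp (F x)) :=
        mul_nonneg hb0 (sub_nonneg.2 hee)
      nlinarith [hkey2, hprod]
  have hkey := hmono (Set.left_mem_Icc.2 ht0) (Set.mem_Icc.2 ⟨ht0, le_rfl⟩) ht0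
  simp only [hh_def, hF0, hB0, Real.exp_zero, mul_one, mul_zero, add_zero] at hkey
  -- hkey : √(u 0) ≤ √(u t) * exp (F t) + exp (F t) * B t
  have h1 : Real.sqrt (u 0) * Real.exp (-(2 * Λ * ε + ε ^ 2) / (2 * γ))
      ≤ Real.sqrt (u 0) * Real.exp (-(F t)) := by
    apply mul_le_mul_of_nonneg_left _ (Real.sqrt_nonneg _)
    apply Real.exp_le_exp.2
    have := hFle t
    rw [neg_div]
    linarith
  have h2 : Real.sqrt (u 0) * Real.exp (-(F t)) ≤ Real.sqrt (u t) + B t := by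
    rw [Real.exp_neg, ← div_eq_mul_inv, div_le_iff₀ (Real.exp_pos (F t))]
    nlinarith [hkey]
  have h3 := hBle t
  linarith
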